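/- If A and B are Hermitian matrices with A ⪯ B, then Tr[Pos(A)] ≤ Tr[Pos(B)]. -/

import Mathlib

open scoped ComplexOrder
open scoped Matrix

open Matrix in
lemma aux_trace_re_nonneg {n : ℕ} {M : Matrix (Fin n) (Fin n) ℂ} (h : M.PosSemidef) :
    0 ≤ M.trace.re := by
  rw [Matrix.trace, Complex.re_sum]
  refine Finset.sum_nonneg fun i _ => ?_
  have := h.diag_nonneg (i := i)
  exact (Complex.le_def.mp this).1

open Matrix MatrixOrder in
lemma aux_trace_mul_re_nonneg {n : ℕ} {P Q : Matrix (Fin n) (Fin n) ℂ}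
    (hP : P.PosSemidef) (hQ : Q.PosSemidef) : 0 ≤ (P * Q).trace.re := by
  have hS : (CFC.sqrt P).PosSemidef := (CFC.sqrt_nonneg P).posSemidef
  have hSH : (CFC.sqrt P)ᴴ = CFC.sqrt P := hS.1
  have h1 : ((CFC.sqrt P)ᴴ * Q * CFC.sqrt P).PosSemidef := hQ.conjTranspose_mul_mul_same _
  have h2 : ((CFC.sqrt P)ᴴ * Q * CFC.sqrt P).trace = (P * Q).trace := by
    rw [trace_mul_cycle, hSH, CFC.sqrt_mul_sqrt_self P hP.nonneg]
  have := aux_trace_re_nonneg h1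
  rwa [h2] at this

/-- If `A ⪯ B` (Hermitian matrices, Loewner order) then `Tr[Pos(A)] ≤ Tr[Pos(B)]`,
where `Pos` denotes the positive part in the decomposition into PSD matrices
with orthogonal supports. -/
theorem stmt_2 {n : ℕ} (A B Ap An Bp Bn : Matrix (Fin n) (Fin n) ℂ)
    (hA : A.IsHermitian) (hB : B.IsHermitian)
    (hAp : Ap.PosSemidef) (hAn : An.PosSemidef)
    (hAdec : A = Ap - An) (hAorth : Ap * An = 0)
    (hBp : Bp.PosSemidef) (hBn : Bn.PosSemidef)
    (hBdec : B = Bp - Bn) (hBorth : Bp * Bn = 0)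
    (hAB : (B - A).PosSemidef) :
    Ap.trace.re ≤ Bp.trace.re := by
  have hApH : Ap.IsHermitian := hAp.1
  set U : Matrix (Fin n) (Fin n) ℂ := (hApH.eigenvectorUnitary : Matrix (Fin n) (Fin n) ℂ) with hU
  have hUU' : U * Uᴴ = 1 := by
    rw [← Matrix.star_eq_conjTranspose]
    exact Matrix.mem_unitaryGroup_iff.mp hApH.eigenvectorUnitary.2
  have hUU : Uᴴ * U = 1 := by
    rw [← Matrix.star_eq_conjTranspose]
    exact Matrix.mem_unitaryGroup_iff'.mp hApH.eigenvectorUnitary.2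
  set d : Fin n → ℂ := fun i => if hApH.eigenvalues i = 0 then 0 else 1 with hd
  set X : Matrix (Fin n) (Fin n) ℂ := U * Matrix.diagonal d * Uᴴ with hXdef
  have hspec : Ap = U * Matrix.diagonal (RCLike.ofReal ∘ hApH.eigenvalues) * Uᴴ := by
    rw [← Matrix.star_eq_conjTranspose]
    exact hApH.spectral_theorem
  have hd0 : 0 ≤ d := by
    intro i
    simp only [hd]
    split <;> simp
  have hX : X.PosSemidef := by
    rw [hXdef, ← Matrix.star_eq_conjTranspose]
    exact (Matrix.PosSemidef.diagonal hd0).mul_mul_conjTranspose_same U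
  have h1X : (1 - X).PosSemidef := by
    have hE : U * Matrix.diagonal (fun i => 1 - d i) * Uᴴ = 1 - X := by
      have : Matrix.diagonal (fun i => (1:ℂ) - d i) = 1 - Matrix.diagonal d := by
        rw [← Matrix.diagonal_one, ← Matrix.diagonal_sub]
      rw [this, Matrix.mul_sub, Matrix.sub_mul, Matrix.mul_one, hUU', hXdef]
    rw [← hE, ← Matrix.star_eq_conjTranspose]
    refine (Matrix.PosSemidef.diagonal ?_).mul_mul_conjTranspose_same U
    intro i
    simp only [hd]
    split <;> simp
  have key : ∀ P Q : Matrix (Fin n) (Fin n) ℂ,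
      (U * P * Uᴴ) * (U * Q * Uᴴ) = U * (P * Q) * Uᴴ := by
    intro P Q
    simp only [Matrix.mul_assoc]
    rw [← Matrix.mul_assoc Uᴴ U, hUU, Matrix.one_mul]
  have hXAp : X * Ap = Ap := by
    rw [hXdef, hspec, key, Matrix.diagonal_mul_diagonal]
    have hde : (fun i => d i * (RCLike.ofReal ∘ hApH.eigenvalues) i)
        = RCLike.ofReal ∘ hApH.eigenvalues := by
      funext i
      simp only [hd, Function.comp_apply]
      split
      · rename_i h
        rw [h]
        simp
      · rw [one_mul]
    rw [hde]
  set M : Matrix (Fin n) (Fin n) ℂ := Uᴴ * An * U with hM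
  have hAnM : An = U * M * Uᴴ := by
    rw [hM, ← Matrix.mul_assoc, ← Matrix.mul_assoc, hUU', Matrix.one_mul, Matrix.mul_assoc,
      hUU', Matrix.mul_one]
  have hDM : Matrix.diagonal (RCLike.ofReal ∘ hApH.eigenvalues) * M = 0 := by
    have h0 : Uᴴ * (Ap * An) * U = 0 := by rw [hAorth, Matrix.mul_zero, Matrix.zero_mul]
    have h1 : Matrix.diagonal (RCLike.ofReal ∘ hApH.eigenvalues) * M
        = Uᴴ * (Ap * An) * U := by
      conv_rhs => rw [hspec]
      rw [hM]
      simp only [Matrix.mul_assoc]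
      rw [← Matrix.mul_assoc Uᴴ U, hUU, Matrix.one_mul]
    rw [h1, h0]
  have hdM : Matrix.diagonal d * M = 0 := by
    ext i j
    rw [Matrix.diagonal_mul]
    have h2 := congrFun (congrFun hDM i) j
    rw [Matrix.diagonal_mul] at h2
    simp only [Matrix.zero_apply, Function.comp_apply] at h2 ⊢
    simp only [hd]
    split
    · rw [zero_mul]
    · rename_i h
      have hMij : M i j = 0 := by
        have hne : ((hApH.eigenvalues i : ℝ) : ℂ) ≠ 0 := by simpa using h
        exact (mul_eq_zero.mp h2).resolve_left hne
      rw [hMij, mul_zero]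
  have hXAn : X * An = 0 := by
    rw [hXdef, hAnM, key, hdM, Matrix.mul_zero, Matrix.zero_mul]
  -- trace chain
  have e1 : (X * A).trace = Ap.trace := by
    rw [hAdec, Matrix.mul_sub, Matrix.trace_sub, hXAp, hXAn, Matrix.trace_zero, sub_zero]
  have e2 : 0 ≤ ((X * B).trace - (X * A).trace).re := by
    rw [← Matrix.trace_sub, ← Matrix.mul_sub]
    exact aux_trace_mul_re_nonneg hX hAB
  have e3 : (X * B).trace = (X * Bp).trace - (X * Bn).trace := by
    rw [hBdec, Matrix.mul_sub, Matrix.trace_sub]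
  have e4 : 0 ≤ ((X * Bn).trace).re := aux_trace_mul_re_nonneg hX hBn
  have e5 : Bp.trace = (X * Bp).trace + ((1 - X) * Bp).trace := by
    rw [← Matrix.trace_add, ← Matrix.add_mul]
    rw [add_sub_cancel, Matrix.one_mul]
  have e6 : 0 ≤ (((1 - X) * Bp).trace).re := aux_trace_mul_re_nonneg h1X hBp
  have := congrArg Complex.re e1
  have := congrArg Complex.re e3
  have := congrArg Complex.re e5
  simp only [Complex.sub_re, Complex.add_re] at *
  linarith
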